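/- If a finite word w of length n has the property that the number of occurrences of a fixed letter in w is coprime to n, then the n cyclic permutations (rotations) of w are pairwise distinct. -/

import Mathlib

/-- Counting lemma for periodic words: if `w` has length `m * d` and
`w.drop d ++ w.take d = w`, then `w.count a = m * (w.take d).count a`. -/
lemma count_of_periodic {A : Type*} [DecidableEq A] (a : A) :
    ∀ (m d : ℕ) (w : List A), w.length = m * d → w.drop d ++ w.take d = w →
      w.count a = m * (w.take d).count a := by
  intro m
  induction m with
  | zero =>
    intro d w hlen _
    have : w = [] := List.eq_nil_of_length_eq_zero (by simpa using hlen)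
    simp [this]
  | succ m ih =>
    intro d w hlen hper
    set u := w.take d with hu
    set v := w.drop d with hv
    have hdlen : d ≤ w.length := by nlinarith [hlen]
    have hulen : u.length = d := by simp [hu, hdlen]
    have hvlen : v.length = m * d := by
      simp [hv, hlen]; ring_nf; omega
    have hw : w = u ++ v := (List.take_append_drop d w).symm
    have hcomm : u ++ v = v ++ u := by rw [← hw, hper]
    rcases Nat.eq_zero_or_pos m with hm | hm
    · subst hm
      have : v = [] := List.eq_nil_of_length_eq_zero (by simp [hvlen])
      rw [hw, this]
      simp
    · -- m ≥ 1, so |v| ≥ d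
      have hdv : d ≤ v.length := by nlinarith [hvlen]
      have hvtake : v.take d = u := by
        have h1 : (v ++ u).take d = v.take d :=
          List.take_append_of_le_length hdv
        have h2 : (u ++ v).take d = u := List.take_left' hulen
        rw [hcomm, h1] at h2
        exact h2
      have hvsplit : v = u ++ v.drop d := by
        conv_lhs => rw [← List.take_append_drop d v, hvtake]
      have hvper : v.drop d ++ v.take d = v := by
        rw [hvtake]
        have : u ++ (u ++ v.drop d) = (u ++ v.drop d) ++ u := by
          rw [← hvsplit]; exact hcomm
        have h3 : u ++ v.drop d = v.drop d ++ u := by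
          rw [List.append_assoc] at this
          exact List.append_cancel_left this
        rw [← h3, ← hvsplit]
      have ihv := ih d v hvlen hvper
      rw [hvtake] at ihv
      rw [hw, List.count_append, ihv]
      ring

/-- If `w.rotate k = w` then `w.rotate (m * k) = w`. -/
lemma rotate_mul_of_rotate_eq {A : Type*} {w : List A} {k : ℕ}
    (h : w.rotate k = w) : ∀ m, w.rotate (m * k) = w := by
  intro m
  induction m with
  | zero => simp
  | succ m ih =>
    have : w.rotate (m * k + k) = (w.rotate (m * k)).rotate k := by
      rw [List.rotate_rotate]
    rw [Nat.succ_mul, this, ih, h]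

/-- If the number of occurrences of a fixed letter in a word `w` of length `n` is
coprime to `n`, then the `n` rotations of `w` are pairwise distinct. -/
theorem rotations_distinct_of_coprime_count {A : Type*} [DecidableEq A] [Fintype A]
    (w : List A) (n : ℕ) (hn : w.length = n) (a : A)
    (hcop : Nat.Coprime (w.count a) n) :
    ∀ i j, i < n → j < n → w.rotate i = w.rotate j → i = j := by
  -- first reduce to: no nontrivial period
  have key : ∀ k, 0 < k → k < n → w.rotate k ≠ w := by
    intro k hk0 hkn hrot
    set d := Nat.gcd k n with hd
    have hdk : d ≤ k := Nat.le_of_dvd hk0 (Nat.gcd_dvd_left k n)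
    have hdn : d < n := lt_of_le_of_lt hdk hkn
    have hd0 : 0 < d := Nat.gcd_pos_of_pos_left n hk0
    obtain ⟨m, _, hm⟩ := Nat.exists_mul_mod_eq_gcd (k := n) (n := k) hdn
    -- hm : k * m % n = Nat.gcd k n = d
    have hrotd : w.rotate d = w := by
      have h1 : w.rotate (m * k) = w := rotate_mul_of_rotate_eq hrot m
      have h2 : w.rotate (m * k % n) = w.rotate (m * k) := by
        rw [← hn]; exact List.rotate_mod w (m * k)
      have hm' : k * m % n = d := by rw [hd]; exact hm
      rw [← hm', Nat.mul_comm k m, h2, h1]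
    have hper : w.drop d ++ w.take d = w := by
      have := List.rotate_eq_drop_append_take (l := w) (n := d)
        (by omega : d ≤ w.length)
      rw [← this, hrotd]
    have hdvd : d ∣ n := Nat.gcd_dvd_right k n
    obtain ⟨q, hq⟩ := hdvd
    have hcount := count_of_periodic a q d w (by rw [hn, hq]; ring) hper
    -- q divides count and q divides n, q > 1
    have hq1 : 1 < q := by
      rcases Nat.lt_or_ge q 2 with h | h
      · interval_cases q <;> omega
      · omega
    have hqc : q ∣ w.count a := ⟨(w.take d).count a, hcount⟩
    have hqn : q ∣ n := ⟨d, by rw [hq]; ring⟩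
    have := Nat.eq_one_of_dvd_coprimes hcop hqc hqn
    omega
  have step : ∀ i j, i < j → j < n → w.rotate i = w.rotate j → False := by
    intro i j hij hjn heq
    have h1 : (w.rotate (j - i)).rotate i = w.rotate i := by
      rw [List.rotate_rotate]
      have : j - i + i = j := by omega
      rw [this, heq]
    have h2 : w.rotate (j - i) = w := List.rotate_eq_rotate.mp h1
    exact key (j - i) (by omega) (by omega) h2
  intro i j hi hj hij
  rcases Nat.lt_trichotomy i j with h | h | h
  · exact absurd hij (fun e => step i j h hj e)
  · exact h
  · exact absurd hij.symm (fun e => step j i h hi e)
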